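/- Let k be a field of characteristic 0 and V a k-vector space whose dimension n+1 is even, and let q be an even integer with 2 ≤ q ≤ n+1. Then there exists ω ∈ ⋀^q V such that for every integer p ≥ 0 the left multiplication map ⋀^p V → ⋀^{p+q} V, x ↦ ω ∧ x, has rank min( C(n+1, p), C(n+1, p+q) ); that is, the wedge multiplication by ω has maximal rank in every degree. (Hence a generic q-form, for q even and n+1 even, defines a contraction of maximal rank.) -/

import Mathlib

namespace HLM

variable {k : Type*} [Field k] {ν : ℕ}

/-- The model space: functions on subsets of `Fin ν`. -/
abbrev W (k : Type*) [Field k] (ν : ℕ) := Finset (Fin ν) → k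

/-- number of elements of `T` below `i` -/
def cnt (i : Fin ν) (T : Finset (Fin ν)) : ℕ := (T.filter (fun j => j < i)).card

/-- the sign `(-1)^(cnt i T)` -/
def sgn (k : Type*) [Field k] (i : Fin ν) (T : Finset (Fin ν)) : k := (-1 : k) ^ cnt i T

/-- creation operator -/
def aOp (k : Type*) [Field k] (i : Fin ν) : W k ν →ₗ[k] W k ν where
  toFun f T := if i ∈ T then sgn k i T * f (T.erase i) else 0
  map_add' f g := by funext T; by_cases h : i ∈ T <;> simp [h, mul_add]
  map_smul' c f := by funext T; by_cases h : i ∈ T <;> simp [h]; ring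

lemma aOp_apply (i : Fin ν) (f : W k ν) (T : Finset (Fin ν)) :
    aOp k i f T = if i ∈ T then sgn k i T * f (T.erase i) else 0 := rfl

lemma cnt_erase_of_lt {i j : Fin ν} {T : Finset (Fin ν)} (hij : i < j) (hiT : i ∈ T) :
    cnt j (T.erase i) + 1 = cnt j T := by
  unfold cnt
  rw [Finset.filter_erase, Finset.card_erase_of_mem (by simp [hiT, hij])]
  have h : 1 ≤ (T.filter (fun j' => j' < j)).card :=
    Finset.card_pos.2 ⟨i, by simp [hiT, hij]⟩
  omega

lemma cnt_erase_of_gt {i j : Fin ν} {T : Finset (Fin ν)} (hij : j < i) :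
    cnt j (T.erase i) = cnt j T := by
  unfold cnt
  rw [Finset.filter_erase]
  apply congrArg
  apply Finset.erase_eq_of_notMem
  simp only [Finset.mem_filter, not_and]
  intro _
  exact not_lt.2 hij.le

lemma aOp_anticomm (i j : Fin ν) (f : W k ν) :
    aOp k i (aOp k j f) + aOp k j (aOp k i f) = 0 := by
  rcases eq_or_ne i j with rfl | hij
  · funext T
    by_cases h : i ∈ T <;> simp [aOp_apply, h]
  · -- wlog-style: prove for i < j then symmetrize
    have key : ∀ i j : Fin ν, i < j → ∀ T : Finset (Fin ν),
        aOp k i (aOp k j f) T + aOp k j (aOp k i f) T = 0 := by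
      intro i j hij T
      by_cases hi : i ∈ T
      · by_cases hj : j ∈ T
        · have hj' : j ∈ T.erase i := Finset.mem_erase.2 ⟨hij.ne', hj⟩
          have hi' : i ∈ T.erase j := Finset.mem_erase.2 ⟨hij.ne, hi⟩
          simp only [aOp_apply, if_pos hi, if_pos hj, if_pos hi', if_pos hj']
          rw [Finset.erase_right_comm (a := i) (b := j)]
          have e1 : cnt j (T.erase i) + 1 = cnt j T := cnt_erase_of_lt hij hi
          have e2 : cnt i (T.erase j) = cnt i T := cnt_erase_of_gt hij
          unfold sgn
          rw [e2, ← e1, pow_succ]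
          ring
        · have hj' : j ∉ T.erase i := fun h => hj (Finset.mem_of_mem_erase h)
          simp [aOp_apply, hi, hj, hj']
      · by_cases hj : j ∈ T
        · have hi' : i ∉ T.erase j := fun h => hi (Finset.mem_of_mem_erase h)
          simp [aOp_apply, hi, hj, hi']
        · simp [aOp_apply, hi, hj]
    rcases hij.lt_or_gt with h | h
    · funext T; exact key i j h T
    · funext T; rw [add_comm]; exact key j i h T

end HLM

namespace HLM2

open HLM

variable {k : Type*} [Field k] {N : ℕ}

/-- lower element of the `i`-th pair -/
def lo (i : Fin N) : Fin (2*N) := ⟨2*i.1, by omega⟩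

/-- upper element of the `i`-th pair -/
def hi (i : Fin N) : Fin (2*N) := ⟨2*i.1+1, by omega⟩

lemma lo_lt_hi (i : Fin N) : lo i < hi i := by simp [lo, hi, Fin.lt_def]

lemma lo_ne_hi (i j : Fin N) : lo i ≠ hi j := by
  simp only [lo, hi, Fin.ne_iff_vne]; omega

lemma lo_inj {i j : Fin N} (h : lo i = lo j) : i = j := by
  simp only [lo, Fin.mk.injEq] at h; exact Fin.ext (by omega)

lemma hi_inj {i j : Fin N} (h : hi i = hi j) : i = j := by
  simp only [hi, Fin.mk.injEq] at h; exact Fin.ext (by omega)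

variable (k N) in
/-- raising operator for the pair `i` -/
def Lp (i : Fin N) : W k (2*N) →ₗ[k] W k (2*N) where
  toFun f T := if lo i ∈ T ∧ hi i ∈ T then f ((T.erase (lo i)).erase (hi i)) else 0
  map_add' f g := by funext T; by_cases h : lo i ∈ T ∧ hi i ∈ T <;> simp [h]
  map_smul' c f := by funext T; by_cases h : lo i ∈ T ∧ hi i ∈ T <;> simp [h]

variable (k N) in
/-- lowering operator for the pair `i` -/
def Gp (i : Fin N) : W k (2*N) →ₗ[k] W k (2*N) where
  toFun f S := if lo i ∉ S ∧ hi i ∉ S then f (insert (lo i) (insert (hi i) S)) else 0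
  map_add' f g := by funext S; by_cases h : lo i ∉ S ∧ hi i ∉ S <;> simp [h]
  map_smul' c f := by funext S; by_cases h : lo i ∉ S ∧ hi i ∉ S <;> simp [h]

lemma Lp_apply (i : Fin N) (f : W k (2*N)) (T : Finset (Fin (2*N))) :
    Lp k N i f T = if lo i ∈ T ∧ hi i ∈ T then f ((T.erase (lo i)).erase (hi i)) else 0 := rfl

lemma Gp_apply (i : Fin N) (f : W k (2*N)) (S : Finset (Fin (2*N))) :
    Gp k N i f S = if lo i ∉ S ∧ hi i ∉ S then f (insert (lo i) (insert (hi i) S)) else 0 := rfl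

variable (k N) in
/-- the raising operator (wedge with the symplectic form) -/
def LL : Module.End k (W k (2*N)) := ∑ i : Fin N, Lp k N i

variable (k N) in
/-- the lowering operator -/
def GG : Module.End k (W k (2*N)) := ∑ i : Fin N, Gp k N i

lemma LL_apply (f : W k (2*N)) (T : Finset (Fin (2*N))) :
    LL k N f T = ∑ i : Fin N, Lp k N i f T := by
  simp [LL, LinearMap.sum_apply, Finset.sum_apply]

lemma GG_apply (f : W k (2*N)) (S : Finset (Fin (2*N))) :
    GG k N f S = ∑ i : Fin N, Gp k N i f S := by
  simp [GG, LinearMap.sum_apply, Finset.sum_apply]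

/-- the composition of the two creation operators of a pair is `Lp` -/
lemma aOp_pair (i : Fin N) (f : W k (2*N)) :
    aOp k (lo i) (aOp k (hi i) f) = Lp k N i f := by
  funext T
  by_cases hl : lo i ∈ T
  · by_cases hh : hi i ∈ T
    · have hh' : hi i ∈ T.erase (lo i) := Finset.mem_erase.2 ⟨fun h => lo_ne_hi i i h.symm, hh⟩
      simp only [aOp_apply, if_pos hl, if_pos hh', Lp_apply, if_pos (And.intro hl hh)]
      have e1 : cnt (hi i) (T.erase (lo i)) + 1 = cnt (hi i) T :=
        cnt_erase_of_lt (lo_lt_hi i) hl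
      have e2 : cnt (hi i) T = cnt (lo i) T + 1 := by
        unfold cnt
        have : T.filter (fun j => j < hi i) = insert (lo i) (T.filter (fun j => j < lo i)) := by
          ext x
          simp only [Finset.mem_filter, Finset.mem_insert]
          constructor
          · rintro ⟨hx, hlt⟩
            rcases eq_or_ne x (lo i) with rfl | hne
            · exact Or.inl rfl
            · refine Or.inr ⟨hx, ?_⟩
              have h1 : x.1 < 2*i.1+1 := hlt
              have h2 : x.1 ≠ 2*i.1 := fun hc => hne (Fin.ext hc)
              exact show x.1 < 2*i.1 by omega
          · rintro (rfl | ⟨hx, hlt⟩)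
            · exact ⟨hl, lo_lt_hi i⟩
            · exact ⟨hx, hlt.trans (lo_lt_hi i)⟩
        rw [this, Finset.card_insert_of_notMem (by simp)]
      have e3 : cnt (hi i) (T.erase (lo i)) = cnt (lo i) T := by omega
      unfold sgn
      rw [e3, ← mul_assoc, ← mul_pow]
      norm_num
    · have hh' : hi i ∉ T.erase (lo i) := fun h => hh (Finset.mem_of_mem_erase h)
      simp [aOp_apply, Lp_apply, hl, hh, hh']
  · simp [aOp_apply, Lp_apply, hl]

end HLM2

namespace HLM2
open HLM
variable {k : Type*} [Field k] {N : ℕ}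

variable (k) in
/-- functions supported on subsets of cardinality `p` -/
def Wsub (ν p : ℕ) : Submodule k (W k ν) where
  carrier := {f | ∀ S, f S ≠ 0 → S.card = p}
  add_mem' := by
    intro f g hf hg S h
    by_cases h1 : f S = 0
    · exact hg S (by simpa [h1] using h)
    · exact hf S h1
  zero_mem' := by intro S h; simp at h
  smul_mem' := by
    intro c f hf S h
    exact hf S (fun h0 => h (by simp [h0]))

lemma mem_Wsub {ν p : ℕ} {f : W k ν} : f ∈ Wsub k ν p ↔ ∀ S, f S ≠ 0 → S.card = p := Iff.rfl

lemma single_mem_Wsub {ν : ℕ} (S : Finset (Fin ν)) (c : k) :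
    Pi.single S c ∈ Wsub k ν S.card := by
  intro T h
  rw [Pi.single_apply] at h
  by_cases hTS : T = S
  · rw [hTS]
  · simp [hTS] at h

lemma Wsub_apply_eq_zero {ν p : ℕ} {f : W k ν} (hf : f ∈ Wsub k ν p) {S : Finset (Fin ν)}
    (h : S.card ≠ p) : f S = 0 := by
  by_contra h0; exact h (hf S h0)

lemma Wsub_eq_zero_of_gt {ν p : ℕ} {f : W k ν} (hf : f ∈ Wsub k ν p) (h : ν < p) : f = 0 := by
  funext S
  refine Wsub_apply_eq_zero hf ?_
  have := Finset.card_le_univ S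
  simp only [Finset.card_univ, Fintype.card_fin] at this
  omega

lemma Lp_mem_Wsub {p : ℕ} (i : Fin N) {f : W k (2*N)} (hf : f ∈ Wsub k (2*N) p) :
    Lp k N i f ∈ Wsub k (2*N) (p + 2) := by
  intro T h
  rw [Lp_apply] at h
  by_cases hc : lo i ∈ T ∧ hi i ∈ T
  · rw [if_pos hc] at h
    have hcard := hf _ h
    have h1 : (T.erase (lo i)).card = T.card - 1 := Finset.card_erase_of_mem hc.1
    have h2 : ((T.erase (lo i)).erase (hi i)).card = (T.erase (lo i)).card - 1 :=
      Finset.card_erase_of_mem (Finset.mem_erase.2 ⟨fun h => lo_ne_hi i i h.symm, hc.2⟩)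
    have h3 : 0 < T.card := Finset.card_pos.2 ⟨_, hc.1⟩
    have h4 : 0 < (T.erase (lo i)).card :=
      Finset.card_pos.2 ⟨_, Finset.mem_erase.2 ⟨fun h => lo_ne_hi i i h.symm, hc.2⟩⟩
    omega
  · rw [if_neg hc] at h; exact absurd rfl h

lemma Gp_mem_Wsub {p : ℕ} (i : Fin N) {f : W k (2*N)} (hf : f ∈ Wsub k (2*N) (p+2)) :
    Gp k N i f ∈ Wsub k (2*N) p := by
  intro S h
  rw [Gp_apply] at h
  by_cases hc : lo i ∉ S ∧ hi i ∉ S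
  · rw [if_pos hc] at h
    have hcard := hf _ h
    have h1 : (insert (hi i) S).card = S.card + 1 := Finset.card_insert_of_notMem hc.2
    have h2 : (insert (lo i) (insert (hi i) S)).card = (insert (hi i) S).card + 1 :=
      Finset.card_insert_of_notMem (by
        simp only [Finset.mem_insert, not_or]
        exact ⟨lo_ne_hi i i, hc.1⟩)
    omega
  · rw [if_neg hc] at h; exact absurd rfl h

lemma LL_mem_Wsub {p : ℕ} {f : W k (2*N)} (hf : f ∈ Wsub k (2*N) p) :
    LL k N f ∈ Wsub k (2*N) (p + 2) := by
  unfold LL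
  rw [LinearMap.sum_apply]
  exact Submodule.sum_mem _ (fun i _ => Lp_mem_Wsub i hf)

lemma GG_mem_Wsub {p : ℕ} {f : W k (2*N)} (hf : f ∈ Wsub k (2*N) (p+2)) :
    GG k N f ∈ Wsub k (2*N) p := by
  unfold GG
  rw [LinearMap.sum_apply]
  exact Submodule.sum_mem _ (fun i _ => Gp_mem_Wsub i hf)

lemma GG_eq_zero_of_lt {p : ℕ} {f : W k (2*N)} (hf : f ∈ Wsub k (2*N) p) (hp : p < 2) :
    GG k N f = 0 := by
  funext S
  rw [GG_apply]
  apply Finset.sum_eq_zero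
  intro i _
  rw [Gp_apply]
  by_cases hc : lo i ∉ S ∧ hi i ∉ S
  · rw [if_pos hc]
    refine Wsub_apply_eq_zero hf ?_
    have h1 : (insert (hi i) S).card = S.card + 1 := Finset.card_insert_of_notMem hc.2
    have h2 : (insert (lo i) (insert (hi i) S)).card = (insert (hi i) S).card + 1 :=
      Finset.card_insert_of_notMem (by
        simp only [Finset.mem_insert, not_or]
        exact ⟨lo_ne_hi i i, hc.1⟩)
    omega
  · rw [if_neg hc]

lemma LL_pow_mem_Wsub {p m : ℕ} {f : W k (2*N)} (hf : f ∈ Wsub k (2*N) p) :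
    (LL k N ^ m) f ∈ Wsub k (2*N) (p + 2*m) := by
  induction m with
  | zero => simpa using hf
  | succ m ih =>
      have : (LL k N ^ (m+1)) f = LL k N ((LL k N ^ m) f) := by
        rw [pow_succ']; rfl
      rw [this]
      have e : p + 2*(m+1) = (p + 2*m) + 2 := by omega
      rw [e]
      exact LL_mem_Wsub ih

lemma GG_pow_mem_Wsub {p m : ℕ} {g : W k (2*N)} (hg : g ∈ Wsub k (2*N) (p + 2*m)) :
    (GG k N ^ m) g ∈ Wsub k (2*N) p := by
  induction m generalizing g with
  | zero => simpa using hg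
  | succ m ih =>
      have h1 : (GG k N ^ (m+1)) g = (GG k N ^ m) (GG k N g) := by
        rw [pow_succ]; rfl
      rw [h1]
      apply ih
      have e : p + 2*(m+1) = (p + 2*m) + 2 := by omega
      rw [e] at hg
      exact GG_mem_Wsub hg

end HLM2

namespace HLM2
open HLM
variable {k : Type*} [Field k] {N : ℕ}

lemma count_pairs (S : Finset (Fin (2*N))) :
    (Finset.univ.filter (fun i : Fin N => lo i ∉ S ∧ hi i ∉ S)).card + S.card
      = N + (Finset.univ.filter (fun i : Fin N => lo i ∈ S ∧ hi i ∈ S)).card := by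
  have hcard : S.card = ∑ i : Fin N,
      (S.filter (fun x => x = lo i ∨ x = hi i)).card := by
    have := Finset.card_eq_sum_card_fiberwise
      (f := fun x : Fin (2*N) => (⟨x.1 / 2, by omega⟩ : Fin N)) (s := S) (t := Finset.univ)
      (fun x _ => Finset.mem_univ _)
    rw [this]
    apply Finset.sum_congr rfl
    intro i _
    congr 1
    ext x
    simp only [Finset.mem_filter, Fin.mk.injEq, lo, hi, Fin.ext_iff]
    constructor
    · rintro ⟨hx, h⟩
      refine ⟨hx, ?_⟩
      omega
    · rintro ⟨hx, h⟩
      refine ⟨hx, ?_⟩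
      omega
  have hper : ∀ i : Fin N, (S.filter (fun x => x = lo i ∨ x = hi i)).card
      = (if lo i ∈ S then 1 else 0) + (if hi i ∈ S then 1 else 0) := by
    intro i
    rw [Finset.filter_or, Finset.card_union_of_disjoint, Finset.filter_eq', Finset.filter_eq']
    · split_ifs <;> simp
    · rw [Finset.filter_eq', Finset.filter_eq']
      have := lo_ne_hi i i
      split_ifs <;> simp [Finset.disjoint_singleton_left, this, this.symm]
  rw [hcard, Finset.card_filter, Finset.card_filter, ← Finset.sum_add_distrib]
  have step : ∀ i ∈ (Finset.univ : Finset (Fin N)),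
      ((if lo i ∉ S ∧ hi i ∉ S then 1 else 0) + (S.filter (fun x => x = lo i ∨ x = hi i)).card)
        = 1 + (if lo i ∈ S ∧ hi i ∈ S then 1 else 0) := by
    intro i _
    rw [hper i]
    by_cases h1 : lo i ∈ S <;> by_cases h2 : hi i ∈ S <;> simp [h1, h2]
  rw [Finset.sum_congr rfl step, Finset.sum_add_distrib]
  simp

lemma Gp_Lp_comm {i j : Fin N} (hij : i ≠ j) (f : W k (2*N)) :
    Gp k N i (Lp k N j f) = Lp k N j (Gp k N i f) := by
  have d1 : lo i ≠ lo j := fun h => hij (lo_inj h)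
  have d2 : lo i ≠ hi j := lo_ne_hi i j
  have d3 : hi i ≠ lo j := fun h => lo_ne_hi j i h.symm
  have d4 : hi i ≠ hi j := fun h => hij (hi_inj h)
  funext S
  simp only [Gp_apply, Lp_apply]
  by_cases hg : lo i ∉ S ∧ hi i ∉ S
  · have hg' : lo i ∉ (S.erase (lo j)).erase (hi j) ∧ hi i ∉ (S.erase (lo j)).erase (hi j) :=
      ⟨fun h => hg.1 (Finset.mem_of_mem_erase (Finset.mem_of_mem_erase h)),
       fun h => hg.2 (Finset.mem_of_mem_erase (Finset.mem_of_mem_erase h))⟩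
    by_cases hl : lo j ∈ S ∧ hi j ∈ S
    · have hl' : lo j ∈ insert (lo i) (insert (hi i) S) ∧
          hi j ∈ insert (lo i) (insert (hi i) S) := by
        simp only [Finset.mem_insert]
        exact ⟨Or.inr (Or.inr hl.1), Or.inr (Or.inr hl.2)⟩
      rw [if_pos hg, if_pos hl', if_pos hl, if_pos hg']
      congr 1
      ext x
      simp only [Finset.mem_insert, Finset.mem_erase]
      constructor
      · rintro ⟨h1, h2, (rfl | rfl | hx)⟩
        · exact Or.inl rfl
        · exact Or.inr (Or.inl rfl)
        · exact Or.inr (Or.inr ⟨h1, h2, hx⟩)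
      · rintro (rfl | rfl | ⟨h1, h2, hx⟩)
        · exact ⟨d2, d1, Or.inl rfl⟩
        · exact ⟨d4, d3, Or.inr (Or.inl rfl)⟩
        · exact ⟨h1, h2, Or.inr (Or.inr hx)⟩
    · have hl' : ¬(lo j ∈ insert (lo i) (insert (hi i) S) ∧
          hi j ∈ insert (lo i) (insert (hi i) S)) := by
        simp only [Finset.mem_insert, not_and_or] at hl ⊢
        rcases hl with h | h
        · exact Or.inl (by
            push_neg
            exact ⟨d1.symm, d3.symm, h⟩)
        · exact Or.inr (by
            push_neg
            exact ⟨d2.symm, d4.symm, h⟩)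
      rw [if_pos hg, if_neg hl', if_neg hl]
  · have hg' : ¬(lo i ∉ (S.erase (lo j)).erase (hi j) ∧ hi i ∉ (S.erase (lo j)).erase (hi j)) := by
      push_neg at hg ⊢
      intro hlo
      by_cases h1 : lo i ∈ S
      · exact absurd (Finset.mem_erase.2 ⟨d2, Finset.mem_erase.2 ⟨d1, h1⟩⟩) hlo
      · exact Finset.mem_erase.2 ⟨d4, Finset.mem_erase.2 ⟨d3, hg h1⟩⟩
    rw [if_neg hg]
    by_cases hl : lo j ∈ S ∧ hi j ∈ S
    · rw [if_pos hl, if_neg hg']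
    · rw [if_neg hl]

lemma Gp_Lp_diag (i : Fin N) (f : W k (2*N)) (S : Finset (Fin (2*N))) :
    Gp k N i (Lp k N i f) S = if lo i ∉ S ∧ hi i ∉ S then f S else 0 := by
  simp only [Gp_apply, Lp_apply]
  by_cases hg : lo i ∉ S ∧ hi i ∉ S
  · have hfull : lo i ∈ insert (lo i) (insert (hi i) S) ∧
        hi i ∈ insert (lo i) (insert (hi i) S) := by
      simp [Finset.mem_insert]
    rw [if_pos hg, if_pos hfull, if_pos hg]
    congr 1
    rw [Finset.erase_insert (by simp [Finset.mem_insert, lo_ne_hi i i, hg.1]),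
      Finset.erase_insert hg.2]
  · rw [if_neg hg, if_neg hg]

lemma Lp_Gp_diag (i : Fin N) (f : W k (2*N)) (S : Finset (Fin (2*N))) :
    Lp k N i (Gp k N i f) S = if lo i ∈ S ∧ hi i ∈ S then f S else 0 := by
  simp only [Gp_apply, Lp_apply]
  by_cases hl : lo i ∈ S ∧ hi i ∈ S
  · have hfree : lo i ∉ (S.erase (lo i)).erase (hi i) ∧ hi i ∉ (S.erase (lo i)).erase (hi i) :=
      ⟨fun h => (Finset.mem_erase.1 (Finset.mem_of_mem_erase h)).1 rfl,
       fun h => (Finset.mem_erase.1 h).1 rfl⟩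
    rw [if_pos hl, if_pos hfree, if_pos hl]
    congr 1
    rw [Finset.insert_erase (Finset.mem_erase.2 ⟨fun h => lo_ne_hi i i h.symm, hl.2⟩),
      Finset.insert_erase hl.1]
  · rw [if_neg hl, if_neg hl]

theorem comm_GL {p : ℕ} {f : W k (2*N)} (hf : f ∈ Wsub k (2*N) p) :
    GG k N (LL k N f) - LL k N (GG k N f) = ((N : k) - (p : k)) • f := by
  funext S
  have lhs1 : GG k N (LL k N f) S = ∑ i : Fin N, ∑ j : Fin N, Gp k N i (Lp k N j f) S := by
    rw [GG_apply]
    apply Finset.sum_congr rfl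
    intro i _
    have : LL k N f = ∑ j : Fin N, Lp k N j f := by
      rw [LL, LinearMap.sum_apply]
    rw [this, map_sum, Finset.sum_apply]
  have lhs2 : LL k N (GG k N f) S = ∑ i : Fin N, ∑ j : Fin N, Lp k N j (Gp k N i f) S := by
    rw [LL_apply]
    rw [Finset.sum_comm]
    apply Finset.sum_congr rfl
    intro i _
    have : GG k N f = ∑ i : Fin N, Gp k N i f := by
      rw [GG, LinearMap.sum_apply]
    rw [this, map_sum, Finset.sum_apply]
  have key : GG k N (LL k N f) S - LL k N (GG k N f) S
      = ∑ i : Fin N, ((if lo i ∉ S ∧ hi i ∉ S then f S else 0)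
          - (if lo i ∈ S ∧ hi i ∈ S then f S else 0)) := by
    rw [lhs1, lhs2, ← Finset.sum_sub_distrib]
    apply Finset.sum_congr rfl
    intro i _
    rw [← Finset.sum_sub_distrib]
    rw [Finset.sum_eq_single i]
    · rw [Gp_Lp_diag, Lp_Gp_diag]
    · intro j _ hji
      rw [Gp_Lp_comm (Ne.symm hji) f, sub_self]
    · intro h
      exact absurd (Finset.mem_univ i) h
  have : GG k N (LL k N f) S - LL k N (GG k N f) S
      = ((Finset.univ.filter (fun i : Fin N => lo i ∉ S ∧ hi i ∉ S)).card : k) * f S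
        - ((Finset.univ.filter (fun i : Fin N => lo i ∈ S ∧ hi i ∈ S)).card : k) * f S := by
    rw [key, Finset.sum_sub_distrib]
    congr 1
    · rw [Finset.sum_ite, Finset.sum_const, Finset.sum_const_zero, add_zero, nsmul_eq_mul]
    · rw [Finset.sum_ite, Finset.sum_const, Finset.sum_const_zero, add_zero, nsmul_eq_mul]
  have goal2 : GG k N (LL k N f) S - LL k N (GG k N f) S = ((N:k) - (p:k)) * f S := by
    rw [this]
    by_cases hfS : f S = 0
    · rw [hfS]; ring
    · have hc := count_pairs (N := N) S
      rw [hf S hfS] at hc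
      have hck : ((Finset.univ.filter (fun i : Fin N => lo i ∉ S ∧ hi i ∉ S)).card : k) + (p:k)
          = (N:k) + ((Finset.univ.filter (fun i : Fin N => lo i ∈ S ∧ hi i ∈ S)).card : k) := by
        exact_mod_cast congrArg (fun t : ℕ => (t : k)) hc
      have : ((Finset.univ.filter (fun i : Fin N => lo i ∉ S ∧ hi i ∉ S)).card : k)
          - ((Finset.univ.filter (fun i : Fin N => lo i ∈ S ∧ hi i ∈ S)).card : k)
          = (N:k) - (p:k) := by
        rw [sub_eq_sub_iff_add_eq_add]
        linear_combination hck
      rw [← sub_mul, this]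
  calc (GG k N (LL k N f) - LL k N (GG k N f)) S
      = GG k N (LL k N f) S - LL k N (GG k N f) S := rfl
    _ = ((N:k) - (p:k)) * f S := goal2
    _ = (((N:k) - (p:k)) • f) S := by simp

end HLM2

namespace HLM2
open HLM
variable {k : Type*} [Field k] {N : ℕ}

lemma pow_succ_apply (A : Module.End k (W k (2*N))) (m : ℕ) (f : W k (2*N)) :
    (A ^ (m+1)) f = A ((A ^ m) f) := by
  rw [pow_succ']; rfl

lemma pow_succ_apply' (A : Module.End k (W k (2*N))) (m : ℕ) (f : W k (2*N)) :
    (A ^ (m+1)) f = (A ^ m) (A f) := by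
  rw [pow_succ]; rfl

/-- iterated commutator identity -/
lemma comm_GL_pow {p : ℕ} {f : W k (2*N)} (hf : f ∈ Wsub k (2*N) p) (m : ℕ) :
    GG k N ((LL k N ^ (m+1)) f)
      = (LL k N ^ (m+1)) (GG k N f)
        + (((m:k)+1) * ((N:k) - (p:k) - (m:k))) • (LL k N ^ m) f := by
  induction m with
  | zero =>
      have h := comm_GL (k := k) (N := N) hf
      have h' : GG k N (LL k N f) = LL k N (GG k N f) + ((N:k)-(p:k)) • f := by
        have h2 := sub_eq_iff_eq_add.1 h
        rw [h2, add_comm]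
      simpa [pow_succ_apply, pow_zero] using h'
  | succ m ih =>
      have hmem : (LL k N ^ (m+1)) f ∈ Wsub k (2*N) (p + 2*(m+1)) := LL_pow_mem_Wsub hf
      have hcomm := comm_GL (k := k) (N := N) hmem
      have e1 : GG k N ((LL k N ^ (m+2)) f)
          = LL k N (GG k N ((LL k N ^ (m+1)) f))
            + ((N:k) - ((p + 2*(m+1) : ℕ):k)) • (LL k N ^ (m+1)) f := by
        have : (LL k N ^ (m+2)) f = LL k N ((LL k N ^ (m+1)) f) := pow_succ_apply _ _ _
        rw [this, ← hcomm]
        abel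
      rw [e1, ih]
      rw [map_add, map_smul]
      have e2 : LL k N ((LL k N ^ (m+1)) (GG k N f)) = (LL k N ^ (m+2)) (GG k N f) :=
        (pow_succ_apply _ _ _).symm
      have e3 : LL k N ((LL k N ^ m) f) = (LL k N ^ (m+1)) f := (pow_succ_apply _ _ _).symm
      rw [e2, e3]
      rw [add_assoc, ← add_smul]
      congr 2
      push_cast
      ring

variable [CharZero k]

/-- main injectivity result: `L^m` is injective on degrees `p` with `p + m ≤ N` -/
theorem LL_pow_inj : ∀ p m : ℕ, p + m ≤ N → ∀ f ∈ Wsub k (2*N) p,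
    (LL k N ^ m) f = 0 → f = 0 := by
  intro p
  induction p using Nat.strong_induction_on with
  | _ p IHp =>
    intro m
    induction m with
    | zero =>
        intro _ f _ h
        simpa using h
    | succ m IHm =>
        intro hle f hf h
        have key : (LL k N ^ (m+1)) (GG k N f)
            + (((m:k)+1) * ((N:k) - (p:k) - (m:k))) • (LL k N ^ m) f = 0 := by
          have := comm_GL_pow (k := k) (N := N) hf m
          rw [h, map_zero] at this
          exact this.symm
        have hGf : GG k N f = 0 := by
          by_cases hp2 : p < 2
          · exact GG_eq_zero_of_lt hf hp2
          · -- apply LL to key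
            have key2 : (LL k N ^ (m+2)) (GG k N f) = 0 := by
              have := congrArg (LL k N) key
              rw [map_add, map_smul, map_zero] at this
              rw [← pow_succ_apply] at this
              rw [← pow_succ_apply] at this
              rw [h, smul_zero, add_zero] at this
              exact this
            have hmem : GG k N f ∈ Wsub k (2*N) (p - 2) := by
              have : f ∈ Wsub k (2*N) ((p-2)+2) := by
                have e : (p-2)+2 = p := by omega
                rw [e]; exact hf
              exact GG_mem_Wsub this
            exact IHp (p-2) (by omega) (m+2) (by omega) _ hmem key2
        rw [hGf, map_zero, zero_add] at key
        have hc : ((m:k)+1) * ((N:k) - (p:k) - (m:k)) ≠ 0 := by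
          apply mul_ne_zero
          · have h1 : ((m+1 : ℕ) : k) ≠ 0 := Nat.cast_ne_zero.2 (Nat.succ_ne_zero m)
            push_cast at h1
            exact h1
          · have e : ((N - p - m : ℕ) : k) = (N:k) - (p:k) - (m:k) := by
              rw [Nat.cast_sub (by omega : m ≤ N - p), Nat.cast_sub (by omega : p ≤ N)]
            rw [← e]
            exact Nat.cast_ne_zero.2 (by omega)
        have hLm : (LL k N ^ m) f = 0 := by
          rcases smul_eq_zero.1 key with h1 | h1
          · exact absurd h1 hc
          · exact h1
        exact IHm (by omega) f hf hLm

end HLM2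

namespace HLM2
open HLM
variable {k : Type*} [Field k] {N : ℕ}

variable (k N) in
/-- complementation operator -/
def CC : W k (2*N) →ₗ[k] W k (2*N) where
  toFun f S := f Sᶜ
  map_add' f g := rfl
  map_smul' c f := rfl

lemma CC_apply (f : W k (2*N)) (S : Finset (Fin (2*N))) : CC k N f S = f Sᶜ := rfl

lemma CC_CC (f : W k (2*N)) : CC k N (CC k N f) = f := by
  funext S; simp [CC_apply]

lemma CC_mem_Wsub {p : ℕ} {f : W k (2*N)} (hf : f ∈ Wsub k (2*N) p) :
    CC k N f ∈ Wsub k (2*N) (2*N - p) := by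
  intro S h
  rw [CC_apply] at h
  have := hf _ h
  have hcc : Sᶜ.card = 2*N - S.card := by
    rw [Finset.card_compl, Fintype.card_fin]
  have hS : S.card ≤ 2*N := by
    have := Finset.card_le_univ S
    simpa [Finset.card_univ, Fintype.card_fin] using this
  have hSc : Sᶜ.card ≤ 2*N := by
    have := Finset.card_le_univ Sᶜ
    simpa [Finset.card_univ, Fintype.card_fin] using this
  omega

lemma CC_LL_CC (f : W k (2*N)) : CC k N (LL k N (CC k N f)) = GG k N f := by
  funext S
  rw [CC_apply, LL_apply, GG_apply]
  apply Finset.sum_congr rfl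
  intro i _
  rw [Lp_apply, Gp_apply, CC_apply]
  have hmem : (lo i ∈ Sᶜ ∧ hi i ∈ Sᶜ) ↔ (lo i ∉ S ∧ hi i ∉ S) := by
    simp [Finset.mem_compl]
  by_cases h : lo i ∉ S ∧ hi i ∉ S
  · rw [if_pos (hmem.2 h), if_pos h]
    congr 1
    ext x
    simp only [Finset.mem_erase, Finset.mem_compl, Finset.mem_insert, not_or]
    tauto
  · rw [if_neg (fun hc => h (hmem.1 hc)), if_neg h]

lemma CC_LL_pow_CC (m : ℕ) (f : W k (2*N)) :
    CC k N ((LL k N ^ m) (CC k N f)) = (GG k N ^ m) f := by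
  induction m generalizing f with
  | zero => simpa using CC_CC f
  | succ m ih =>
      rw [pow_succ_apply' (GG k N) m f, ← ih (GG k N f)]
      congr 1
      rw [← CC_LL_CC f, CC_CC]
      rw [pow_succ_apply']

lemma CC_inj {f : W k (2*N)} (h : CC k N f = 0) : f = 0 := by
  rw [← CC_CC f, h, map_zero]

variable [CharZero k]

/-- injectivity of `GG^m` in high degrees -/
theorem GG_pow_inj {j m : ℕ} (hjm : N + m ≤ j) (hj : j ≤ 2*N) {g : W k (2*N)}
    (hg : g ∈ Wsub k (2*N) j) (h : (GG k N ^ m) g = 0) : g = 0 := by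
  have hCg : CC k N g ∈ Wsub k (2*N) (2*N - j) := CC_mem_Wsub hg
  have hL : (LL k N ^ m) (CC k N g) = 0 := by
    have h2 : CC k N ((LL k N ^ m) (CC k N g)) = 0 := by
      rw [CC_LL_pow_CC, h]
    exact CC_inj h2
  have := LL_pow_inj (k := k) (N := N) (2*N - j) m (by omega) _ hCg hL
  exact CC_inj this

end HLM2

namespace HLM2
open HLM
variable {k : Type*} [Field k] {N : ℕ}

variable (k) in
/-- the coordinate pairing -/
def bb {ν : ℕ} (f g : W k ν) : k := ∑ S, f S * g S

lemma bb_single_left {ν : ℕ} (S : Finset (Fin ν)) (g : W k ν) :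
    bb k (Pi.single S (1:k)) g = g S := by
  unfold bb
  rw [Finset.sum_eq_single S]
  · simp
  · intro T _ hT; simp [Pi.single_apply, hT]
  · intro h; exact absurd (Finset.mem_univ S) h

lemma bb_add_left {ν : ℕ} (f₁ f₂ g : W k ν) : bb k (f₁ + f₂) g = bb k f₁ g + bb k f₂ g := by
  unfold bb; rw [← Finset.sum_add_distrib]; apply Finset.sum_congr rfl; intros; simp [add_mul]

lemma bb_smul_left {ν : ℕ} (c : k) (f g : W k ν) : bb k (c • f) g = c * bb k f g := by
  unfold bb; rw [Finset.mul_sum]; apply Finset.sum_congr rfl; intros; simp; ring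

lemma bb_add_right {ν : ℕ} (f g₁ g₂ : W k ν) : bb k f (g₁ + g₂) = bb k f g₁ + bb k f g₂ := by
  unfold bb; rw [← Finset.sum_add_distrib]; apply Finset.sum_congr rfl; intros; simp [mul_add]

lemma bb_smul_right {ν : ℕ} (c : k) (f g : W k ν) : bb k f (c • g) = c * bb k f g := by
  unfold bb; rw [Finset.mul_sum]; apply Finset.sum_congr rfl; intros; simp; ring

lemma bb_sum_left {ν : ℕ} {ι : Type*} (s : Finset ι) (F : ι → W k ν) (g : W k ν) :
    bb k (∑ i ∈ s, F i) g = ∑ i ∈ s, bb k (F i) g := by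
  unfold bb
  simp_rw [Finset.sum_apply, Finset.sum_mul]
  rw [Finset.sum_comm]

lemma bb_sum_right {ν : ℕ} {ι : Type*} (s : Finset ι) (f : W k ν) (G : ι → W k ν) :
    bb k f (∑ i ∈ s, G i) = ∑ i ∈ s, bb k f (G i) := by
  unfold bb
  simp_rw [Finset.sum_apply, Finset.mul_sum]
  rw [Finset.sum_comm]

lemma bb_Lp (i : Fin N) (f g : W k (2*N)) :
    bb k (Lp k N i f) g = bb k f (Gp k N i g) := by
  unfold bb
  have l1 : ∀ T : Finset (Fin (2*N)), Lp k N i f T * g T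
      = if lo i ∈ T ∧ hi i ∈ T then f ((T.erase (lo i)).erase (hi i)) * g T else 0 := by
    intro T; rw [Lp_apply, ite_mul, zero_mul]
  have r1 : ∀ S : Finset (Fin (2*N)), f S * Gp k N i g S
      = if lo i ∉ S ∧ hi i ∉ S then f S * g (insert (lo i) (insert (hi i) S)) else 0 := by
    intro S; rw [Gp_apply, mul_ite, mul_zero]
  simp_rw [l1, r1]
  rw [← Finset.sum_filter, ← Finset.sum_filter]
  have hupd_dwn : ∀ T : Finset (Fin (2*N)), lo i ∈ T ∧ hi i ∈ T →
      insert (lo i) (insert (hi i) ((T.erase (lo i)).erase (hi i))) = T := by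
    intro T hT
    rw [Finset.insert_erase (Finset.mem_erase.2 ⟨fun h => lo_ne_hi i i h.symm, hT.2⟩),
      Finset.insert_erase hT.1]
  have hdwn_upd : ∀ S : Finset (Fin (2*N)), lo i ∉ S ∧ hi i ∉ S →
      ((insert (lo i) (insert (hi i) S)).erase (lo i)).erase (hi i) = S := by
    intro S hS
    have h1 : lo i ∉ insert (hi i) S := by
      simp only [Finset.mem_insert, not_or]
      exact ⟨lo_ne_hi i i, hS.1⟩
    rw [Finset.erase_insert h1, Finset.erase_insert hS.2]
  refine Finset.sum_nbij' (i := fun T => (T.erase (lo i)).erase (hi i))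
    (j := fun S => insert (lo i) (insert (hi i) S)) ?_ ?_ ?_ ?_ ?_
  · intro T hT
    rw [Finset.mem_filter] at hT ⊢
    exact ⟨Finset.mem_univ _,
      fun h => (Finset.mem_erase.1 (Finset.mem_of_mem_erase h)).1 rfl,
      fun h => (Finset.mem_erase.1 h).1 rfl⟩
  · intro S hS
    rw [Finset.mem_filter] at hS ⊢
    refine ⟨Finset.mem_univ _, by simp [Finset.mem_insert], by simp [Finset.mem_insert]⟩
  · intro T hT
    rw [Finset.mem_filter] at hT
    exact hupd_dwn T hT.2
  · intro S hS
    rw [Finset.mem_filter] at hS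
    exact hdwn_upd S hS.2
  · intro T hT
    rw [Finset.mem_filter] at hT
    rw [hupd_dwn T hT.2]

lemma bb_LL (f g : W k (2*N)) : bb k (LL k N f) g = bb k f (GG k N g) := by
  have hL : LL k N f = ∑ i : Fin N, Lp k N i f := by rw [LL, LinearMap.sum_apply]
  have hG : GG k N g = ∑ i : Fin N, Gp k N i g := by rw [GG, LinearMap.sum_apply]
  rw [hL, hG, bb_sum_left, bb_sum_right]
  exact Finset.sum_congr rfl (fun i _ => bb_Lp i f g)

lemma bb_LL_pow (m : ℕ) (f g : W k (2*N)) :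
    bb k ((LL k N ^ m) f) g = bb k f ((GG k N ^ m) g) := by
  induction m generalizing f g with
  | zero => simp
  | succ m ih =>
      rw [pow_succ_apply' (LL k N) m f, ih (LL k N f) g, bb_LL, pow_succ_apply (GG k N) m g]

variable (k) in
lemma finrank_Wsub (ν p : ℕ) : Module.finrank k ↥(Wsub k ν p) = ν.choose p := by
  let E : ↥(Wsub k ν p) ≃ₗ[k] ({S : Finset (Fin ν) // S.card = p} → k) := {
    toFun := fun f S => f.1 S.1
    map_add' := fun f g => rfl
    map_smul' := fun c f => rfl
    invFun := fun g => ⟨fun S => if h : S.card = p then g ⟨S, h⟩ else 0, by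
      intro S h
      by_cases hS : S.card = p
      · exact hS
      · simp [hS] at h⟩
    left_inv := fun f => by
      apply Subtype.ext
      funext S
      by_cases h : S.card = p
      · simp [h]
      · simp only [h, dif_neg, not_false_iff]
        exact (Wsub_apply_eq_zero f.2 h).symm
    right_inv := fun g => by
      funext S
      simp [S.2] }
  rw [E.finrank_eq, Module.finrank_pi, Fintype.card_subtype]
  have : (Finset.univ.filter (fun S : Finset (Fin ν) => S.card = p))
      = Finset.powersetCard p Finset.univ := by
    ext S
    simp [Finset.mem_powersetCard, Finset.subset_univ]
  rw [this, Finset.card_powersetCard, Finset.card_univ, Fintype.card_fin]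

variable [CharZero k]

theorem rank_low {p m : ℕ} (h : p + m ≤ N) :
    Module.finrank k ↥(Submodule.map ((LL k N ^ m : Module.End k (W k (2*N))) : W k (2*N) →ₗ[k] W k (2*N)) (Wsub k (2*N) p))
      = (2*N).choose p := by
  set T : ↥(Wsub k (2*N) p) →ₗ[k] W k (2*N) :=
    ((LL k N ^ m : Module.End k (W k (2*N))) : W k (2*N) →ₗ[k] W k (2*N)).comp
      (Wsub k (2*N) p).subtype with hT
  have hker : LinearMap.ker T = ⊥ := by
    rw [LinearMap.ker_eq_bot']
    intro x hx
    apply Subtype.ext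
    exact LL_pow_inj (k := k) (N := N) p m h x.1 x.2 hx
  have hrange : LinearMap.range T
      = Submodule.map ((LL k N ^ m : Module.End k (W k (2*N))) : W k (2*N) →ₗ[k] W k (2*N))
          (Wsub k (2*N) p) := by
    rw [hT, LinearMap.range_comp, Submodule.range_subtype]
  rw [← hrange]
  have := LinearMap.finrank_range_add_finrank_ker T
  rw [hker, finrank_bot, add_zero] at this
  rw [this, finrank_Wsub]

theorem rank_zero {p m : ℕ} (h : 2*N < p + 2*m) :
    Submodule.map ((LL k N ^ m : Module.End k (W k (2*N))) : W k (2*N) →ₗ[k] W k (2*N))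
      (Wsub k (2*N) p) = ⊥ := by
  rw [Submodule.eq_bot_iff]
  rintro x ⟨f, hf, rfl⟩
  exact Wsub_eq_zero_of_gt (LL_pow_mem_Wsub hf) h

theorem rank_high {p m : ℕ} (h1 : N ≤ p + m) (h2 : p + 2*m ≤ 2*N) :
    Module.finrank k ↥(Submodule.map ((LL k N ^ m : Module.End k (W k (2*N))) : W k (2*N) →ₗ[k] W k (2*N)) (Wsub k (2*N) p))
      = (2*N).choose (p + 2*m) := by
  set I := Submodule.map ((LL k N ^ m : Module.End k (W k (2*N))) : W k (2*N) →ₗ[k] W k (2*N))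
    (Wsub k (2*N) p) with hI
  have hIle : I ≤ Wsub k (2*N) (p + 2*m) := by
    rintro x ⟨f, hf, rfl⟩
    exact LL_pow_mem_Wsub hf
  have le1 : Module.finrank k ↥I ≤ Module.finrank k ↥(Wsub k (2*N) (p+2*m)) :=
    Submodule.finrank_mono hIle
  -- the dual map
  let Θ : ↥(Wsub k (2*N) (p+2*m)) →ₗ[k] Module.Dual k ↥I := {
    toFun := fun g => {
      toFun := fun x => bb k x.1 g.1
      map_add' := fun x y => by simp [bb_add_left]
      map_smul' := fun c x => by simp [bb_smul_left] }
    map_add' := fun g₁ g₂ => by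
      apply LinearMap.ext; intro x; simp [bb_add_right]
    map_smul' := fun c g => by
      apply LinearMap.ext; intro x; simp [bb_smul_right] }
  have hΘinj : Function.Injective Θ := by
    rw [injective_iff_map_eq_zero]
    intro g hg
    have hzero : ∀ f ∈ Wsub k (2*N) p, bb k f ((GG k N ^ m) g.1) = 0 := by
      intro f hf
      rw [← bb_LL_pow]
      have hx : (LL k N ^ m) f ∈ I := Submodule.mem_map_of_mem hf
      have h2' := LinearMap.congr_fun hg ⟨(LL k N ^ m) f, hx⟩
      simpa [Θ] using h2' 
    have hGg : (GG k N ^ m) g.1 ∈ Wsub k (2*N) p := GG_pow_mem_Wsub g.2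
    have hGgz : (GG k N ^ m) g.1 = 0 := by
      funext S
      by_cases hS : S.card = p
      · have hmem : Pi.single S (1:k) ∈ Wsub k (2*N) p := by
          rw [← hS]; exact single_mem_Wsub S 1
        have := hzero _ hmem
        rwa [bb_single_left] at this
      · exact Wsub_apply_eq_zero hGg hS
    have : g.1 = 0 := GG_pow_inj (by omega) h2 g.2 hGgz
    exact Subtype.ext this
  have le2 : Module.finrank k ↥(Wsub k (2*N) (p+2*m)) ≤ Module.finrank k ↥I := by
    have := LinearMap.finrank_le_finrank_of_injective hΘinj
    rwa [Subspace.dual_finrank_eq] at this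
  have := le_antisymm le1 le2
  rw [← hI] at *
  rw [this, finrank_Wsub]

end HLM2

namespace HLBridge
open HLM HLM2 ExteriorAlgebra

variable {k : Type*} [Field k] [CharZero k]
variable {V : Type*} [AddCommGroup V] [Module k V]
variable {ν : ℕ} (b : Module.Basis (Fin ν) k V)

/-- linear map sending basis vectors to creation operators -/
noncomputable def alpha : V →ₗ[k] Module.End k (W k ν) :=
  b.constr k (fun i => (aOp k i : Module.End k (W k ν)))

lemma alpha_basis (i : Fin ν) : alpha b (b i) = aOp k i := b.constr_basis k _ i

lemma aOp_anticomm_end (i j : Fin ν) :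
    (aOp k i : Module.End k (W k ν)) * aOp k j + aOp k j * aOp k i = 0 := by
  apply LinearMap.ext
  intro f
  exact aOp_anticomm i j f

lemma alpha_sq_zero (v : V) : alpha b v * alpha b v = 0 := by
  let B2 : V →ₗ[k] V →ₗ[k] Module.End k (W k ν) :=
    LinearMap.mk₂ k (fun v w => alpha b v * alpha b w + alpha b w * alpha b v)
      (fun m₁ m₂ n => by simp only [map_add, add_mul, mul_add]; abel)
      (fun c m n => by
        simp only [map_smul, smul_mul_assoc, mul_smul_comm, ← smul_add])
      (fun m n₁ n₂ => by simp only [map_add, add_mul, mul_add]; abel)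
      (fun c m n => by
        simp only [map_smul, smul_mul_assoc, mul_smul_comm, ← smul_add])
  have hB2 : B2 = 0 := by
    apply b.ext
    intro i
    apply b.ext
    intro j
    show alpha b (b i) * alpha b (b j) + alpha b (b j) * alpha b (b i) = 0
    rw [alpha_basis, alpha_basis]
    exact aOp_anticomm_end i j
  have h := LinearMap.congr_fun (LinearMap.congr_fun hB2 v) v
  simp only [LinearMap.zero_apply] at h
  have h2 : alpha b v * alpha b v + alpha b v * alpha b v = 0 := h
  have h3 : (2 : k) • (alpha b v * alpha b v) = 0 := by
    rw [two_smul]; exact h2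
  have h4 := smul_eq_zero.1 h3
  rcases h4 with h4 | h4
  · exact absurd h4 two_ne_zero
  · exact h4

/-- the algebra morphism from the exterior algebra to endomorphisms of the model -/
noncomputable def Phi : ExteriorAlgebra k V →ₐ[k] Module.End k (W k ν) :=
  ExteriorAlgebra.lift k ⟨alpha b, alpha_sq_zero b⟩

lemma Phi_ι (v : V) : Phi b (ι k v) = alpha b v := ExteriorAlgebra.lift_ι_apply k _ _ v

/-- the linear "symbol" map -/
noncomputable def Psi : ExteriorAlgebra k V →ₗ[k] W k ν where
  toFun x := Phi b x (Pi.single ∅ 1)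
  map_add' x y := by simp [map_add]
  map_smul' c x := by simp [map_smul]

lemma Psi_apply (x : ExteriorAlgebra k V) : Psi b x = Phi b x (Pi.single ∅ 1) := rfl

lemma Psi_mul (x y : ExteriorAlgebra k V) : Psi b (x * y) = Phi b x (Psi b y) := by
  rw [Psi_apply, Psi_apply, map_mul]
  rfl

/-- the monomial attached to a finite set of indices -/
noncomputable def mon (S : Finset (Fin ν)) : ExteriorAlgebra k V :=
  ((S.sort (·≤·)).map (fun i => ι k (b i))).prod

lemma mon_empty : mon b (∅ : Finset (Fin ν)) = 1 := by
  simp [mon, Finset.sort_empty]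

lemma sort_insert_of_lt {S : Finset (Fin ν)} {j : Fin ν} (h : ∀ x ∈ S, j < x) :
    (insert j S).sort (·≤·) = j :: S.sort (·≤·) := by
  have hjS : j ∉ S := fun hj => lt_irrefl j (h j hj)
  refine (fun hp hs => List.Perm.eq_of_pairwise' (Finset.pairwise_sort _ _) hs hp) ?_ ?_
  · have p1 := Finset.sort_perm_toList (insert j S) (·≤·)
    have p2 := Finset.toList_insert hjS
    have p3 := (Finset.sort_perm_toList S (·≤·)).symm
    exact p1.trans (p2.trans (List.Perm.cons j p3))
  · rw [List.pairwise_cons]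
    exact ⟨fun x hx => le_of_lt (h x ((Finset.mem_sort _).1 hx)), Finset.pairwise_sort _ _⟩

lemma mon_insert {S : Finset (Fin ν)} {j : Fin ν} (h : ∀ x ∈ S, j < x) :
    mon b (insert j S) = ι k (b j) * mon b S := by
  unfold mon
  rw [sort_insert_of_lt h, List.map_cons, List.prod_cons]

lemma mon_min' {S : Finset (Fin ν)} (hS : S.Nonempty) :
    mon b S = ι k (b (S.min' hS)) * mon b (S.erase (S.min' hS)) := by
  have h : ∀ x ∈ S.erase (S.min' hS), S.min' hS < x := by
    intro x hx
    rcases Finset.mem_erase.1 hx with ⟨hne, hxS⟩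
    exact lt_of_le_of_ne (S.min'_le x hxS) (Ne.symm hne)
  rw [← mon_insert b h, Finset.insert_erase (S.min'_mem hS)]

/-- straightening: multiplying a monomial by a generator -/
lemma iota_mul_mon : ∀ (n : ℕ) (S : Finset (Fin ν)), S.card = n → ∀ i : Fin ν,
    ∃ c : k, ι k (b i) * mon b S = c • mon b (insert i S) ∧ (i ∈ S → c = 0) := by
  intro n
  induction n using Nat.strong_induction_on with
  | _ n IH =>
    intro S hcard i
    rcases Finset.eq_empty_or_nonempty S with rfl | hS
    · refine ⟨1, ?_, ?_⟩
      · rw [mon_empty, mul_one, one_smul]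
        have h2 : mon b (insert i ∅) = ι k (b i) * mon b ∅ :=
          mon_insert b (fun x hx => absurd hx (Finset.notMem_empty x))
        rw [h2, mon_empty, mul_one]
      · intro h; exact absurd h (Finset.notMem_empty i)
    · set j := S.min' hS with hj
      set S' := S.erase j with hS'
      have hcard' : S'.card = n - 1 := by
        rw [hS', Finset.card_erase_of_mem (S.min'_mem hS), hcard]
      have hn : 1 ≤ n := by
        rw [← hcard]
        exact Finset.card_pos.2 hS
      rcases lt_trichotomy i j with hij | rfl | hij
      · -- i < j = min S, so i ∉ S
        have hiS : i ∉ S := fun h => absurd (S.min'_le i h) (not_le.2 hij)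
        refine ⟨1, ?_, fun h => absurd h hiS⟩
        rw [one_smul]
        exact (mon_insert b (fun x hx => lt_of_lt_of_le hij (S.min'_le x hx))).symm
      · -- i = j
        refine ⟨0, ?_, fun _ => rfl⟩
        rw [Finset.insert_eq_self.2 (S.min'_mem hS), zero_smul]
        rw [mon_min' b hS, ← mul_assoc, ← hj, ι_sq_zero, zero_mul]
      · -- j < i
        obtain ⟨c', hc', hmem'⟩ := IH (n-1) (by omega) S' hcard' i
        have hanti : ι k (b i) * ι k (b j) = - (ι k (b j) * ι k (b i)) :=
          eq_neg_of_add_eq_zero_left (ι_add_mul_swap (b i) (b j))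
        have hmono : mon b S = ι k (b j) * mon b S' := mon_min' b hS
        have hmem_ins : ∀ x ∈ insert i S', j < x := by
          intro x hx
          rcases Finset.mem_insert.1 hx with rfl | hx'
          · exact hij
          · rcases Finset.mem_erase.1 hx' with ⟨hne, hxS⟩
            exact lt_of_le_of_ne (S.min'_le x hxS) (Ne.symm hne)
        have hins : insert j (insert i S') = insert i S := by
          rw [Finset.insert_comm, hS', Finset.insert_erase (S.min'_mem hS)]
        refine ⟨-c', ?_, fun hiS => ?_⟩
        · rw [hmono, ← mul_assoc, hanti, neg_mul, mul_assoc, hc', mul_smul_comm,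
            ← mon_insert b hmem_ins, hins, ← neg_smul]
        · have hiS' : i ∈ S' := Finset.mem_erase.2 ⟨ne_of_gt hij, hiS⟩
          rw [hmem' hiS', neg_zero]

end HLBridge

namespace HLBridge
open HLM HLM2 ExteriorAlgebra

variable {k : Type*} [Field k] [CharZero k]
variable {V : Type*} [AddCommGroup V] [Module k V]
variable {ν : ℕ} (b : Module.Basis (Fin ν) k V)

lemma aOp_single_of_lt {T : Finset (Fin ν)} {i : Fin ν} (h : ∀ x ∈ T, i < x) :
    aOp k i (Pi.single T (1:k)) = Pi.single (insert i T) (1:k) := by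
  have hiT : i ∉ T := fun hi => lt_irrefl i (h i hi)
  funext U
  rw [aOp_apply]
  by_cases hU : U = insert i T
  · subst hU
    rw [if_pos (Finset.mem_insert_self i T), Finset.erase_insert hiT,
      Pi.single_eq_same, Pi.single_eq_same, mul_one]
    unfold sgn
    have hcnt : cnt i (insert i T) = 0 := by
      unfold cnt
      rw [Finset.card_eq_zero]
      apply Finset.filter_eq_empty_iff.2
      intro x hx
      rcases Finset.mem_insert.1 hx with rfl | hx'
      · exact lt_irrefl x
      · exact not_lt.2 (le_of_lt (h x hx'))
    rw [hcnt, pow_zero]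
  · by_cases hiU : i ∈ U
    · rw [if_pos hiU]
      have hne : U.erase i ≠ T := fun hUe => hU (by rw [← Finset.insert_erase hiU, hUe])
      rw [Pi.single_apply, if_neg hne, mul_zero, Pi.single_apply, if_neg hU]
    · rw [if_neg hiU, Pi.single_apply, if_neg hU]

lemma Psi_mon_aux : ∀ (n : ℕ) (S : Finset (Fin ν)), S.card = n →
    Psi b (mon b S) = Pi.single S (1:k) := by
  intro n
  induction n using Nat.strong_induction_on with
  | _ n IH =>
    intro S hn
    rcases Finset.eq_empty_or_nonempty S with rfl | hS
    · rw [mon_empty, Psi_apply, map_one, Module.End.one_apply]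
    · set j := S.min' hS with hj
      set S' := S.erase j with hS'
      have hcard' : S'.card < n := by
        rw [hS', Finset.card_erase_of_mem (S.min'_mem hS), hn]
        have : 0 < S.card := Finset.card_pos.2 hS
        omega
      have hstep := mon_min' b hS
      rw [hstep, Psi_mul, Phi_ι, alpha_basis]
      rw [IH S'.card hcard' S' rfl]
      have hlt : ∀ x ∈ S', j < x := by
        intro x hx
        rcases Finset.mem_erase.1 hx with ⟨hne, hxS⟩
        exact lt_of_le_of_ne (S.min'_le x hxS) (Ne.symm hne)
      rw [aOp_single_of_lt hlt, hS', Finset.insert_erase (S.min'_mem hS)]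

lemma Psi_mon (S : Finset (Fin ν)) : Psi b (mon b S) = Pi.single S (1:k) :=
  Psi_mon_aux b S.card S rfl

/-- monomials of degree `p` lie in the `p`-th exterior power -/
lemma mon_mem_exteriorPower (S : Finset (Fin ν)) : mon b S ∈ ⋀[k]^(S.card) V := by
  have : ∀ l : List (Fin ν), (l.map (fun i => ι k (b i))).prod
      ∈ (LinearMap.range (ι k : V →ₗ[k] ExteriorAlgebra k V)) ^ (l.length) := by
    intro l
    induction l with
    | nil =>
        rw [List.map_nil, List.prod_nil, List.length_nil, pow_zero]
        exact Submodule.one_le.mp le_rfl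
    | cons i l ih =>
        rw [List.map_cons, List.prod_cons, List.length_cons, pow_succ']
        exact Submodule.mul_mem_mul ⟨b i, rfl⟩ ih
  have h := this (S.sort (·≤·))
  rwa [Finset.length_sort] at h

/-- the `p`-th exterior power is spanned by the monomials -/
lemma exteriorPower_eq_span (p : ℕ) :
    (⋀[k]^p V : Submodule k (ExteriorAlgebra k V))
      = Submodule.span k (mon b '' {S : Finset (Fin ν) | S.card = p}) := by
  apply le_antisymm
  · -- ⋀^p ≤ span of monomials
    have hrange : LinearMap.range (ι k : V →ₗ[k] ExteriorAlgebra k V)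
        = Submodule.span k (Set.range (fun i => ι k (b i))) := by
      conv_lhs => rw [LinearMap.range_eq_map, ← b.span_eq, Submodule.map_span]
      rw [← Set.range_comp]
      rfl
    show (LinearMap.range (ι k : V →ₗ[k] ExteriorAlgebra k V))^p ≤ _
    rw [hrange, Submodule.span_pow, Submodule.span_le]
    intro x hx
    rcases Set.mem_pow.1 hx with ⟨f, hf⟩
    have hchoice : ∀ t : Fin p, ∃ i : Fin ν, (f t : ExteriorAlgebra k V) = ι k (b i) := by
      intro t
      rcases (f t).2 with ⟨i, hi⟩
      exact ⟨i, hi.symm⟩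
    choose g hg using hchoice
    have hx' : x = ((List.ofFn g).map (fun i => ι k (b i))).prod := by
      rw [← hf, List.map_ofFn]
      exact congrArg List.prod (congrArg List.ofFn (funext fun t => hg t))
    -- now prove list products are in the span
    have key : ∀ l : List (Fin ν), (l.map (fun i => ι k (b i))).prod
        ∈ Submodule.span k (mon b '' {S : Finset (Fin ν) | S.card = l.length}) := by
      intro l
      induction l with
      | nil =>
          apply Submodule.subset_span
          refine ⟨∅, by simp, ?_⟩
          rw [mon_empty]
          simp
      | cons i l ih =>
          rw [List.map_cons, List.prod_cons]
          have hmap := Submodule.mem_map_of_mem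
            (f := LinearMap.mulLeft k (ι k (b i))) ih
          rw [Submodule.map_span] at hmap
          refine Submodule.span_le.2 ?_ hmap
          rintro y ⟨z, ⟨S, hScard, rfl⟩, rfl⟩
          obtain ⟨c, hc, hczero⟩ := iota_mul_mon b S.card S rfl i
          show (LinearMap.mulLeft k (ι k (b i))) (mon b S)
              ∈ Submodule.span k (mon b '' {S | S.card = (i :: l).length})
          rw [LinearMap.mulLeft_apply, hc]
          by_cases hiS : i ∈ S
          · rw [hczero hiS, zero_smul]
            exact Submodule.zero_mem _
          · apply Submodule.smul_mem
            apply Submodule.subset_span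
            exact ⟨insert i S, by
              simp only [Set.mem_setOf_eq, List.length_cons]
              rw [Finset.card_insert_of_notMem hiS, hScard], rfl⟩
    have hk := key (List.ofFn g)
    rw [List.length_ofFn] at hk
    rw [hx']
    exact hk
  · rw [Submodule.span_le]
    rintro x ⟨S, hS, rfl⟩
    have := mon_mem_exteriorPower b S
    rwa [hS] at this

end HLBridge

namespace HLBridge
open HLM HLM2 ExteriorAlgebra

variable {k : Type*} [Field k] [CharZero k]
variable {V : Type*} [AddCommGroup V] [Module k V]
variable {ν : ℕ} (b : Module.Basis (Fin ν) k V)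

/-- the finset of `p`-subsets -/
def Fp (ν p : ℕ) : Finset (Finset (Fin ν)) :=
  (Finset.univ : Finset (Finset (Fin ν))).filter (fun S => S.card = p)

lemma mem_Fp {ν p : ℕ} {S : Finset (Fin ν)} : S ∈ Fp ν p ↔ S.card = p := by
  simp [Fp]

/-- assembling monomials from coefficient functions -/
noncomputable def Mnp (p : ℕ) : W k ν →ₗ[k] ExteriorAlgebra k V where
  toFun c := ∑ S ∈ Fp ν p, c S • mon b S
  map_add' c d := by
    show ∑ S ∈ Fp ν p, (c + d) S • mon b S
      = (∑ S ∈ Fp ν p, c S • mon b S) + ∑ S ∈ Fp ν p, d S • mon b S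
    rw [← Finset.sum_add_distrib]
    exact Finset.sum_congr rfl (fun S _ => by rw [Pi.add_apply, add_smul])
  map_smul' a c := by
    show ∑ S ∈ Fp ν p, (a • c) S • mon b S = a • ∑ S ∈ Fp ν p, c S • mon b S
    rw [Finset.smul_sum]
    exact Finset.sum_congr rfl (fun S _ => by rw [Pi.smul_apply, smul_smul, smul_eq_mul])

lemma Mnp_apply (p : ℕ) (c : W k ν) : Mnp b p c = ∑ S ∈ Fp ν p, c S • mon b S := rfl

lemma Mnp_single (p : ℕ) {S : Finset (Fin ν)} (hS : S.card = p) :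
    Mnp b p (Pi.single S (1:k)) = mon b S := by
  rw [Mnp_apply, Finset.sum_eq_single S]
  · rw [Pi.single_eq_same, one_smul]
  · intro T _ hTS
    rw [Pi.single_apply, if_neg hTS, zero_smul]
  · intro h
    exact absurd (mem_Fp.2 hS) h

lemma exteriorPower_le_range_Mnp (p : ℕ) :
    (⋀[k]^p V : Submodule k (ExteriorAlgebra k V)) ≤ LinearMap.range (Mnp b p) := by
  rw [exteriorPower_eq_span b p, Submodule.span_le]
  rintro x ⟨S, hS, rfl⟩
  exact ⟨Pi.single S 1, Mnp_single b p hS⟩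

lemma sum_single_apply (p : ℕ) (c : W k ν) (T : Finset (Fin ν)) :
    (∑ S ∈ Fp ν p, c S • (Pi.single S (1:k) : W k ν)) T = if T.card = p then c T else 0 := by
  rw [Finset.sum_apply]
  by_cases hT : T.card = p
  · rw [if_pos hT, Finset.sum_eq_single T]
    · rw [Pi.smul_apply, Pi.single_eq_same, smul_eq_mul, mul_one]
    · intro S _ hST
      rw [Pi.smul_apply, Pi.single_apply, if_neg (fun h => hST h.symm), smul_zero]
    · intro h
      exact absurd (mem_Fp.2 hT) h
  · rw [if_neg hT]
    apply Finset.sum_eq_zero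
    intro S hS
    rw [Pi.smul_apply, Pi.single_apply, if_neg (fun h => hT (by rw [h]; exact mem_Fp.1 hS)), smul_zero]

lemma Psi_Mnp (p : ℕ) (c : W k ν) :
    Psi b (Mnp b p c) = ∑ S ∈ Fp ν p, c S • (Pi.single S (1:k) : W k ν) := by
  rw [Mnp_apply, map_sum]
  exact Finset.sum_congr rfl (fun S _ => by rw [map_smul, Psi_mon])

/-- `Psi` is injective on each exterior power -/
lemma Psi_inj_deg (p : ℕ) {x : ExteriorAlgebra k V} (hx : x ∈ ⋀[k]^p V)
    (h : Psi b x = 0) : x = 0 := by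
  obtain ⟨c, rfl⟩ := exteriorPower_le_range_Mnp b p hx
  have hc : ∀ T ∈ Fp ν p, c T = 0 := by
    intro T hT
    have h2 := (Psi_Mnp b p c).symm.trans h
    have h3 := congrFun h2 T
    rw [sum_single_apply, if_pos (mem_Fp.1 hT)] at h3
    exact h3
  rw [Mnp_apply]
  apply Finset.sum_eq_zero
  intro S hS
  rw [hc S hS, zero_smul]

/-- the image of the exterior power under `Psi` is the degree part of the model -/
lemma map_Psi_exteriorPower (p : ℕ) :
    Submodule.map (Psi b) (⋀[k]^p V : Submodule k (ExteriorAlgebra k V)) = Wsub k ν p := by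
  apply le_antisymm
  · rw [exteriorPower_eq_span b p, Submodule.map_span, Submodule.span_le]
    rintro y ⟨z, ⟨S, hS, rfl⟩, rfl⟩
    rw [Psi_mon]
    have := single_mem_Wsub (k := k) S 1
    rwa [hS] at this
  · intro f hf
    have hrep : f = ∑ S ∈ Fp ν p, f S • (Pi.single S (1:k) : W k ν) := by
      funext T
      rw [sum_single_apply]
      by_cases hT : T.card = p
      · rw [if_pos hT]
      · rw [if_neg hT]
        exact Wsub_apply_eq_zero hf hT
    rw [hrep]
    apply Submodule.sum_mem
    intro S hS
    apply Submodule.smul_mem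
    refine ⟨mon b S, ?_, Psi_mon b S⟩
    have := mon_mem_exteriorPower b S
    rwa [mem_Fp.1 hS] at this

end HLBridge

section Choose

/-- step of binomial monotonicity -/
lemma choose_le_choose_succ {n t : ℕ} (h : 2*t + 2 ≤ n) : n.choose t ≤ n.choose (t+1) := by
  have hkey := Nat.choose_succ_right_eq n t
  have h1 : n.choose t * (t+1) ≤ n.choose t * (n - t) := by
    apply Nat.mul_le_mul_left
    omega
  rw [← hkey] at h1
  exact Nat.le_of_mul_le_mul_right h1 (by omega)

lemma choose_mono_of_le_half {n : ℕ} : ∀ a b : ℕ, a ≤ b → 2*b ≤ n →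
    n.choose a ≤ n.choose b := by
  intro a b
  induction b with
  | zero =>
      intro h _
      have ha : a = 0 := Nat.le_zero.1 h
      rw [ha]
  | succ b ih =>
      intro hab hbn
      rcases Nat.eq_or_lt_of_le hab with rfl | hlt
      · exact le_rfl
      · exact le_trans (ih (by omega) (by omega)) (choose_le_choose_succ (by omega))

lemma choose_le_choose_of_mid {n a c : ℕ} (hac : a ≤ c) (hsum : a + c ≤ n) :
    n.choose a ≤ n.choose c := by
  by_cases h : 2*c ≤ n
  · exact choose_mono_of_le_half a c hac h
  · have hcn : c ≤ n := by omega
    rw [← Nat.choose_symm hcn]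
    exact choose_mono_of_le_half a (n - c) (by omega) (by omega)

end Choose

namespace HLBridge
open HLM HLM2 ExteriorAlgebra

variable {k : Type*} [Field k] [CharZero k]
variable {V : Type*} [AddCommGroup V] [Module k V]
variable {N : ℕ} (b : Module.Basis (Fin (2*N)) k V)

/-- the symplectic two-form -/
noncomputable def sigma : ExteriorAlgebra k V :=
  ∑ i : Fin N, ι k (b (lo i)) * ι k (b (hi i))

lemma iota_mem_one (v : V) : ι k v ∈ (⋀[k]^1 V : Submodule k (ExteriorAlgebra k V)) := by
  have h : (⋀[k]^1 V : Submodule k (ExteriorAlgebra k V))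
      = LinearMap.range (ι k : V →ₗ[k] ExteriorAlgebra k V) := pow_one _
  rw [h]
  exact ⟨v, rfl⟩

lemma sigma_mem : sigma b ∈ (⋀[k]^2 V : Submodule k (ExteriorAlgebra k V)) := by
  apply Submodule.sum_mem
  intro i _
  have h := SetLike.mul_mem_graded (A := fun i : ℕ => (⋀[k]^i V : Submodule k (ExteriorAlgebra k V))) (iota_mem_one (b (lo i))) (iota_mem_one (b (hi i)))
  exact h

lemma Phi_sigma : Phi b (sigma b) = LL k N := by
  rw [sigma, map_sum, LL]
  apply Finset.sum_congr rfl
  intro i _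
  rw [map_mul, Phi_ι, Phi_ι, alpha_basis, alpha_basis]
  apply LinearMap.ext
  intro f
  rw [Module.End.mul_apply]
  exact aOp_pair i f

lemma Psi_sigma_pow_mul (m : ℕ) (x : ExteriorAlgebra k V) :
    Psi b (sigma b ^ m * x) = (LL k N ^ m) (Psi b x) := by
  rw [Psi_mul, map_pow, Phi_sigma]

end HLBridge

open ExteriorAlgebra

theorem exists_even_form_maximal_rank_contraction
    (k : Type*) [Field k] [CharZero k]
    (V : Type*) [AddCommGroup V] [Module k V] [FiniteDimensional k V]
    (n q : ℕ) (hdim : Module.finrank k V = n + 1) (hneven : Even (n + 1))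
    (hq : 2 ≤ q) (hqeven : Even q) (hqle : q ≤ n + 1) :
    ∃ ω ∈ ⋀[k]^q V, ∀ p : ℕ,
      Module.finrank k ↥(Submodule.map (LinearMap.mulLeft k ω) (⋀[k]^p V)) =
        min (Nat.choose (n + 1) p) (Nat.choose (n + 1) (p + q)) := by
  classical
  obtain ⟨N, hN⟩ := hneven
  have hN2 : n + 1 = 2*N := by omega
  obtain ⟨m, hm⟩ := hqeven
  have hm2 : q = 2*m := by omega
  have hdim2 : Module.finrank k V = 2*N := by rw [hdim, hN2]
  let b : Module.Basis (Fin (2*N)) k V := Module.finBasisOfFinrankEq k V hdim2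
  refine ⟨HLBridge.sigma b ^ m, ?_, ?_⟩
  · have h2 := SetLike.pow_mem_graded (A := fun i : ℕ => (⋀[k]^i V : Submodule k (ExteriorAlgebra k V))) m (HLBridge.sigma_mem b)
    have he : m • 2 = q := by rw [smul_eq_mul]; omega
    rwa [he] at h2
  · intro p
    simp only [hN2, hm2]
    set M := Submodule.map (LinearMap.mulLeft k (HLBridge.sigma b ^ m)) (⋀[k]^p V) with hM
    haveI hfinP : FiniteDimensional k ↥(⋀[k]^p V : Submodule k (ExteriorAlgebra k V)) := by
      rw [HLBridge.exteriorPower_eq_span b p]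
      apply FiniteDimensional.span_of_finite
      apply Set.Finite.image
      exact Set.toFinite _
    haveI hfinM : FiniteDimensional k ↥M := Module.Finite.map _ _
    have hMle : M ≤ (⋀[k]^(p + 2*m) V : Submodule k (ExteriorAlgebra k V)) := by
      rintro x ⟨y, hy, rfl⟩
      rw [LinearMap.mulLeft_apply]
      have h2 := SetLike.pow_mem_graded (A := fun i : ℕ => (⋀[k]^i V : Submodule k (ExteriorAlgebra k V))) m (HLBridge.sigma_mem b)
      have he : m • 2 = 2*m := by rw [smul_eq_mul]; omega
      rw [he] at h2
      have := SetLike.mul_mem_graded (A := fun i : ℕ => (⋀[k]^i V : Submodule k (ExteriorAlgebra k V))) h2 hy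
      rwa [add_comm] at this
    set T2 : ↥M →ₗ[k] HLM.W k (2*N) := (HLBridge.Psi b).comp M.subtype with hT2
    have hkerT : LinearMap.ker T2 = ⊥ := by
      rw [LinearMap.ker_eq_bot']
      intro x hx
      apply Subtype.ext
      exact HLBridge.Psi_inj_deg b (p + 2*m) (hMle x.2) hx
    have hrange : LinearMap.range T2 = Submodule.map (HLBridge.Psi b) M := by
      rw [hT2, LinearMap.range_comp, Submodule.range_subtype]
    have hrank := LinearMap.finrank_range_add_finrank_ker T2
    rw [hkerT, finrank_bot, add_zero, hrange] at hrank
    have himg : Submodule.map (HLBridge.Psi b) M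
        = Submodule.map ((HLM2.LL k N ^ m : Module.End k (HLM.W k (2*N))) :
            HLM.W k (2*N) →ₗ[k] HLM.W k (2*N)) (HLM2.Wsub k (2*N) p) := by
      rw [hM, ← Submodule.map_comp]
      have hcomp : (HLBridge.Psi b).comp (LinearMap.mulLeft k (HLBridge.sigma b ^ m))
          = (((HLM2.LL k N ^ m : Module.End k (HLM.W k (2*N))) :
              HLM.W k (2*N) →ₗ[k] HLM.W k (2*N))).comp (HLBridge.Psi b) := by
        apply LinearMap.ext
        intro x
        simp only [LinearMap.comp_apply, LinearMap.mulLeft_apply]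
        exact HLBridge.Psi_sigma_pow_mul b m x
      rw [hcomp, Submodule.map_comp, HLBridge.map_Psi_exteriorPower]
    rw [← hrank, himg]
    rcases le_or_gt (p + 2*m) (2*N) with hle | hgt
    · rcases le_or_gt (p + m) N with h1 | h1
      · rw [HLM2.rank_low h1]
        exact (min_eq_left (choose_le_choose_of_mid (by omega) (by omega))).symm
      · rw [HLM2.rank_high (by omega) hle]
        have hsym : (2*N).choose (p+2*m) = (2*N).choose (2*N - (p+2*m)) :=
          (Nat.choose_symm hle).symm
        have hle2 : (2*N).choose (p+2*m) ≤ (2*N).choose p := by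
          rw [hsym]
          exact choose_le_choose_of_mid (by omega) (by omega)
        exact (min_eq_right hle2).symm
    · rw [HLM2.rank_zero hgt, finrank_bot]
      have h0 : (2*N).choose (p+2*m) = 0 := Nat.choose_eq_zero_of_lt (by omega)
      rw [h0]
      simp
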